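/- (Hyper-Pfaffian expansion) Let b_{i_1…i_m} ∈ A for all strictly increasing tuples 1 ≤ i_1 < ⋯ < i_m ≤ mn (a hypermatrix B). Then for every 0 ≤ t ≤ n, Pf_q(B) = Σ_I inv(I, I^c) · Pf_q(B_I) · Pf_q(B_{I^c}), where the sum runs over all subsets I of {1,…,mn} of size mt, I^c is the complement, inv(I, J) = ∏_{i∈I, j∈J, i>j} (−q_{ji}), and Pf_q(B_I) is the quantum hyper-Pfaffian of the sub-hypermatrix of B on the indices of I (using the parameters q_{ab} for a, b ∈ I with the induced ordering). -/

import Mathlib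

open Finset

variable {K : Type*} [Field K] {A : Type*} [Ring A] [Algebra K A]

/-- The `(p,u)`-condition on the multiparameters: `u` is a unit with `u² ≠ -1`, the
`pᵢⱼ, qᵢⱼ` are units with `pᵢⱼqᵢⱼ = u²` for `i < j`, `pᵢⱼpⱼᵢ = qᵢⱼqⱼᵢ = 1` and
`pᵢᵢ = qᵢᵢ = 1`. -/
def PUCondition {N : ℕ} (p q : Fin N → Fin N → K) (u : K) : Prop :=
  u ≠ 0 ∧ u ^ 2 ≠ -1 ∧
    (∀ i j : Fin N, i < j → p i j * q i j = u ^ 2) ∧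
    (∀ i j : Fin N, p i j * p j i = 1) ∧
    (∀ i j : Fin N, q i j * q j i = 1) ∧
    (∀ i : Fin N, p i i = 1 ∧ q i i = 1)

/-- A `(p,u)`-matrix over the `K`-algebra `A`. -/
def IsPUMatrix {N : ℕ} (p q : Fin N → Fin N → K) (u : K)
    (T : Matrix (Fin N) (Fin N) A) : Prop :=
  ∀ i j k l : Fin N, i < j → k < l →
    T i k * T i l = q k l • (T i l * T i k) ∧
    T i k * T j k = p i j • (T j k * T i k) ∧
    q k l • (T i l * T j k) = p i j • (T j k * T i l) ∧
    (q k l)⁻¹ • (T i k * T j l) - (q i j)⁻¹ • (T j l * T i k)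
      = (1 - u⁻¹ ^ 2) • (T i l * T j k)

/-- Ordered product `f 0 * f 1 * ⋯ * f (t-1)` in a (possibly noncommutative) ring. -/
def oprod {t : ℕ} (f : Fin t → A) : A := ((List.finRange t).map f).prod

/-- The sign `(−q)_σ = (−1)^{ℓ(σ)} ∏_{i<j, σ(i)>σ(j)} q_{σ(j)σ(i)}`. -/
def qSign {N : ℕ} (q : Fin N → Fin N → K) (σ : Equiv.Perm (Fin N)) : K :=
  ∏ x ∈ Finset.univ.filter
      (fun x : Fin N × Fin N => x.1 < x.2 ∧ σ x.2 < σ x.1),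
    (-q (σ x.2) (σ x.1))

/-- The quantum determinant `det_q(T) = Σ_σ (−q)_σ t_{1σ(1)} ⋯ t_{Nσ(N)}`. -/
def qdet {N : ℕ} (q : Fin N → Fin N → K) (T : Matrix (Fin N) (Fin N) A) : A :=
  ∑ σ : Equiv.Perm (Fin N), qSign q σ • oprod (fun i => T i (σ i))

/-- The quantum minor with row indices `r` and column indices `c`. -/
def qminor {N t : ℕ} (q : Fin N → Fin N → K) (T : Matrix (Fin N) (Fin N) A)
    (r c : Fin t → Fin N) : A :=
  ∑ σ : Equiv.Perm (Fin t),
    qSign (fun a b => q (c a) (c b)) σ • oprod (fun a => T (r a) (c (σ a)))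
/-- `midx k a = m·k + a` viewed in `Fin (m·n)`. -/
def midx {m n : ℕ} (k : Fin n) (a : Fin m) : Fin (m * n) :=
  ⟨m * k.val + a.val, by
    have hk := k.isLt; have ha := a.isLt
    calc m * k.val + a.val < m * (k.val + 1) := by rw [Nat.mul_succ]; omega
      _ ≤ m * n := Nat.mul_le_mul_left m hk⟩

/-- The multiparameter quantum hyper-Pfaffian
`Pf_q(B) = Σ_{σ∈Π} (−q)_σ b_{σ(1)…σ(m)} ⋯ b_{σ(m(n−1)+1)…σ(mn)}` where `Π` consists of
the permutations increasing on each consecutive block of length `m`. -/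
def qhpf {m n : ℕ} (q : Fin (m * n) → Fin (m * n) → K)
    (B : (Fin m → Fin (m * n)) → A) : A :=
  ∑ σ ∈ Finset.univ.filter
      (fun σ : Equiv.Perm (Fin (m * n)) =>
        ∀ (k : Fin n) (a b : Fin m), a < b → σ (midx k a) < σ (midx k b)),
    qSign q σ • oprod (fun k : Fin n => B (fun a => σ (midx k a)))
section Aux

/-! ### Auxiliary material for the hyper-Pfaffian expansion -/

private lemma finRange_add_aux (a b : ℕ) :
    List.finRange (a + b) =
      (List.finRange a).map (Fin.castAdd b) ++ (List.finRange b).map (Fin.natAdd a) := by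
  apply List.ext_getElem
  · simp
  · intro i h1 h2
    simp only [List.getElem_finRange, List.getElem_append, List.getElem_map,
      List.length_map, List.length_finRange]
    split_ifs with h
    · ext; simp
    · ext; simp; omega

lemma oprod_split {a b : ℕ} (g : Fin (a + b) → A) :
    oprod g = oprod (fun i : Fin a => g (Fin.castAdd b i)) *
      oprod (fun i : Fin b => g (Fin.natAdd a i)) := by
  unfold oprod
  rw [finRange_add_aux, List.map_append, List.prod_append, List.map_map, List.map_map]
  rfl

lemma oprod_cast {a b : ℕ} (h : a = b) (g : Fin b → A) :
    oprod (fun i => g (Fin.cast h i)) = oprod g := by subst h; rfl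

variable {m n t : ℕ}

/-- Embedding of `Fin (m*t)` as the initial segment of `Fin (m*n)`. -/
def emb1 (ht : t ≤ n) (x : Fin (m * t)) : Fin (m * n) :=
  ⟨x.val, lt_of_lt_of_le x.isLt (Nat.mul_le_mul_left m ht)⟩

/-- Embedding of `Fin (m*(n-t))` as the final segment of `Fin (m*n)`. -/
def emb2 (ht : t ≤ n) (x : Fin (m * (n - t))) : Fin (m * n) :=
  ⟨m * t + x.val, by
    have h1 : m * t + m * (n - t) = m * n := by rw [← Nat.mul_add]; congr 1; omega
    have := x.isLt; omega⟩

lemma emb1_inj (ht : t ≤ n) : Function.Injective (emb1 (m := m) ht) := by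
  intro x y h
  simpa [emb1, Fin.ext_iff] using h

lemma emb2_inj (ht : t ≤ n) : Function.Injective (emb2 (m := m) ht) := by
  intro x y h
  simp only [emb2, Fin.ext_iff] at h ⊢
  omega

end Aux
section Aux2

variable {m n t : ℕ}

/-- The set `I = σ(first mt positions)`. -/
def Iset (ht : t ≤ n) (σ : Equiv.Perm (Fin (m * n))) : Finset (Fin (m * n)) :=
  Finset.image (fun a => σ (emb1 ht a)) Finset.univ

def Jset (ht : t ≤ n) (σ : Equiv.Perm (Fin (m * n))) : Finset (Fin (m * n)) :=
  Finset.image (fun a => σ (emb2 ht a)) Finset.univ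

lemma Iset_card (ht : t ≤ n) (σ : Equiv.Perm (Fin (m * n))) :
    (Iset (m := m) ht σ).card = m * t := by
  have : Function.Injective (fun a => σ (emb1 ht a)) := σ.injective.comp (emb1_inj ht)
  rw [Iset, Finset.card_image_of_injective _ this, Finset.card_univ, Fintype.card_fin]

lemma Jset_card (ht : t ≤ n) (σ : Equiv.Perm (Fin (m * n))) :
    (Jset (m := m) ht σ).card = m * (n - t) := by
  have : Function.Injective (fun a => σ (emb2 ht a)) := σ.injective.comp (emb2_inj ht)
  rw [Jset, Finset.card_image_of_injective _ this, Finset.card_univ, Fintype.card_fin]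

/-- The increasing enumeration of `I`. -/
noncomputable def eOf (ht : t ≤ n) (σ : Equiv.Perm (Fin (m * n))) :
    Fin (m * t) → Fin (m * n) :=
  ⇑((Iset ht σ).orderEmbOfFin (Iset_card ht σ))

noncomputable def fOf (ht : t ≤ n) (σ : Equiv.Perm (Fin (m * n))) :
    Fin (m * (n - t)) → Fin (m * n) :=
  ⇑((Jset ht σ).orderEmbOfFin (Jset_card ht σ))

lemma eOf_strictMono (ht : t ≤ n) (σ : Equiv.Perm (Fin (m * n))) :
    StrictMono (eOf ht σ) := ((Iset ht σ).orderEmbOfFin (Iset_card ht σ)).strictMono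

lemma fOf_strictMono (ht : t ≤ n) (σ : Equiv.Perm (Fin (m * n))) :
    StrictMono (fOf ht σ) := ((Jset ht σ).orderEmbOfFin (Jset_card ht σ)).strictMono

lemma sigma_emb1_mem (ht : t ≤ n) (σ : Equiv.Perm (Fin (m * n))) (a : Fin (m * t)) :
    σ (emb1 ht a) ∈ Iset ht σ :=
  Finset.mem_image.mpr ⟨a, Finset.mem_univ a, rfl⟩

lemma sigma_emb2_mem (ht : t ≤ n) (σ : Equiv.Perm (Fin (m * n))) (a : Fin (m * (n - t))) :
    σ (emb2 ht a) ∈ Jset ht σ :=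
  Finset.mem_image.mpr ⟨a, Finset.mem_univ a, rfl⟩

noncomputable def tauFun (ht : t ≤ n) (σ : Equiv.Perm (Fin (m * n)))
    (a : Fin (m * t)) : Fin (m * t) :=
  ((Iset ht σ).orderIsoOfFin (Iset_card ht σ)).symm ⟨σ (emb1 ht a), sigma_emb1_mem ht σ a⟩

noncomputable def rhoFun (ht : t ≤ n) (σ : Equiv.Perm (Fin (m * n)))
    (a : Fin (m * (n - t))) : Fin (m * (n - t)) :=
  ((Jset ht σ).orderIsoOfFin (Jset_card ht σ)).symm ⟨σ (emb2 ht a), sigma_emb2_mem ht σ a⟩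

lemma eOf_tauFun (ht : t ≤ n) (σ : Equiv.Perm (Fin (m * n))) (a : Fin (m * t)) :
    eOf ht σ (tauFun ht σ a) = σ (emb1 ht a) := by
  rw [eOf, tauFun, ← Finset.coe_orderIsoOfFin_apply, OrderIso.apply_symm_apply]

lemma fOf_rhoFun (ht : t ≤ n) (σ : Equiv.Perm (Fin (m * n))) (a : Fin (m * (n - t))) :
    fOf ht σ (rhoFun ht σ a) = σ (emb2 ht a) := by
  rw [fOf, rhoFun, ← Finset.coe_orderIsoOfFin_apply, OrderIso.apply_symm_apply]

lemma tauFun_inj (ht : t ≤ n) (σ : Equiv.Perm (Fin (m * n))) :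
    Function.Injective (tauFun ht σ) := by
  intro a b h
  have h2 : eOf ht σ (tauFun ht σ a) = eOf ht σ (tauFun ht σ b) := by rw [h]
  rw [eOf_tauFun, eOf_tauFun] at h2
  exact emb1_inj ht (σ.injective h2)

lemma rhoFun_inj (ht : t ≤ n) (σ : Equiv.Perm (Fin (m * n))) :
    Function.Injective (rhoFun ht σ) := by
  intro a b h
  have h2 : fOf ht σ (rhoFun ht σ a) = fOf ht σ (rhoFun ht σ b) := by rw [h]
  rw [fOf_rhoFun, fOf_rhoFun] at h2
  exact emb2_inj ht (σ.injective h2)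

noncomputable def tauPerm (ht : t ≤ n) (σ : Equiv.Perm (Fin (m * n))) :
    Equiv.Perm (Fin (m * t)) :=
  Equiv.ofBijective _ (Finite.injective_iff_bijective.mp (tauFun_inj ht σ))

noncomputable def rhoPerm (ht : t ≤ n) (σ : Equiv.Perm (Fin (m * n))) :
    Equiv.Perm (Fin (m * (n - t))) :=
  Equiv.ofBijective _ (Finite.injective_iff_bijective.mp (rhoFun_inj ht σ))

lemma eOf_tauPerm (ht : t ≤ n) (σ : Equiv.Perm (Fin (m * n))) (a : Fin (m * t)) :
    eOf ht σ (tauPerm ht σ a) = σ (emb1 ht a) := eOf_tauFun ht σ a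

lemma fOf_rhoPerm (ht : t ≤ n) (σ : Equiv.Perm (Fin (m * n))) (a : Fin (m * (n - t))) :
    fOf ht σ (rhoPerm ht σ a) = σ (emb2 ht a) := fOf_rhoFun ht σ a

lemma eOf_ne_fOf (ht : t ≤ n) (σ : Equiv.Perm (Fin (m * n)))
    (a : Fin (m * t)) (b : Fin (m * (n - t))) : eOf ht σ a ≠ fOf ht σ b := by
  have h1 : eOf ht σ a ∈ Iset ht σ := Finset.orderEmbOfFin_mem _ _ a
  have h2 : fOf ht σ b ∈ Jset ht σ := Finset.orderEmbOfFin_mem _ _ b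
  obtain ⟨a', -, ha⟩ := Finset.mem_image.mp h1
  obtain ⟨b', -, hb⟩ := Finset.mem_image.mp h2
  intro h
  rw [← ha, ← hb] at h
  have h3 := σ.injective h
  have h4 : (emb1 ht a').val = (emb2 ht b').val := by rw [h3]
  have := a'.isLt
  simp only [emb1, emb2] at h4
  omega

end Aux2
section Aux3

variable {m n t : ℕ}

/-- Glue a function on the initial segment and one on the final segment. -/
def glue (ht : t ≤ n) (e : Fin (m * t) → Fin (m * n))
    (f : Fin (m * (n - t)) → Fin (m * n)) (x : Fin (m * n)) : Fin (m * n) :=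
  if h : x.val < m * t then e ⟨x.val, h⟩
  else f ⟨x.val - m * t, by
    have h1 : m * t + m * (n - t) = m * n := by rw [← Nat.mul_add]; congr 1; omega
    have := x.isLt; omega⟩

lemma glue_emb1 (ht : t ≤ n) (e : Fin (m * t) → Fin (m * n))
    (f : Fin (m * (n - t)) → Fin (m * n)) (a : Fin (m * t)) :
    glue ht e f (emb1 ht a) = e a := by
  have h : (emb1 (m := m) ht a).val < m * t := a.isLt
  rw [glue, dif_pos h]
  congr 1

lemma glue_emb2 (ht : t ≤ n) (e : Fin (m * t) → Fin (m * n))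
    (f : Fin (m * (n - t)) → Fin (m * n)) (a : Fin (m * (n - t))) :
    glue ht e f (emb2 ht a) = f a := by
  have h : ¬ (emb2 (m := m) ht a).val < m * t := by simp [emb2]
  rw [glue, dif_neg h]
  congr 1
  ext
  simp [emb2]

lemma glue_inj (ht : t ≤ n) {e : Fin (m * t) → Fin (m * n)}
    {f : Fin (m * (n - t)) → Fin (m * n)}
    (he : Function.Injective e) (hf : Function.Injective f)
    (hd : ∀ a b, e a ≠ f b) : Function.Injective (glue ht e f) := by
  intro x y hxy
  rw [glue, glue] at hxy
  split_ifs at hxy with h1 h2 h2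
  · have := congrArg Fin.val (he hxy); simp only at this; ext; exact this
  · exact absurd hxy (hd _ _)
  · exact absurd hxy.symm (hd _ _)
  · have := congrArg Fin.val (hf hxy)
    simp only at this
    ext; omega

/-- Position translations between blocks. -/
lemma emb1_midx (ht : t ≤ n) (k : Fin t) (a : Fin m) :
    emb1 ht (midx k a) = midx (⟨k.val, lt_of_lt_of_le k.isLt ht⟩ : Fin n) a := by
  ext; rfl

lemma emb2_midx (ht : t ≤ n) (k : Fin (n - t)) (a : Fin m) :
    emb2 ht (midx k a) = midx (⟨t + k.val, by have := k.isLt; omega⟩ : Fin n) a := by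
  ext
  show m * t + (m * k.val + a.val) = m * (t + k.val) + a.val
  rw [Nat.mul_add]; omega

lemma midx_emb1 (ht : t ≤ n) (k : Fin n) (h : k.val < t) (a : Fin m) :
    midx k a = emb1 ht (midx (⟨k.val, h⟩ : Fin t) a) := by
  ext; rfl

lemma midx_emb2 (ht : t ≤ n) (k : Fin n) (h : ¬ k.val < t) (a : Fin m) :
    midx k a = emb2 ht (midx (⟨k.val - t, by have := k.isLt; omega⟩ : Fin (n - t)) a) := by
  ext
  show m * k.val + a.val = m * t + (m * (k.val - t) + a.val)
  have h2 : m * (t + (k.val - t)) = m * t + m * (k.val - t) := Nat.mul_add m t (k.val - t)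
  have h3 : t + (k.val - t) = k.val := by omega
  rw [h3] at h2
  omega

end Aux3
section Aux4

variable {m n t : ℕ}

lemma qSign_part1 (ht : t ≤ n) (q : Fin (m * n) → Fin (m * n) → K)
    (σ : Equiv.Perm (Fin (m * n))) :
    qSign (fun a b => q (eOf ht σ a) (eOf ht σ b)) (tauPerm ht σ) =
    ∏ x ∈ Finset.univ.filter (fun x : Fin (m * n) × Fin (m * n) =>
        ((x.1 < x.2 ∧ σ x.2 < σ x.1) ∧ x.1.val < m * t) ∧ x.2.val < m * t),
      (-q (σ x.2) (σ x.1)) := by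
  rw [qSign]
  refine Finset.prod_bij (fun y _ => (emb1 ht y.1, emb1 ht y.2)) ?_ ?_ ?_ ?_
  · intro y hy
    simp only [Finset.mem_filter, Finset.mem_univ, true_and] at hy ⊢
    obtain ⟨h1, h2⟩ := hy
    refine ⟨⟨⟨h1, ?_⟩, y.1.isLt⟩, y.2.isLt⟩
    rw [← eOf_tauPerm ht σ y.1, ← eOf_tauPerm ht σ y.2]
    exact (eOf_strictMono ht σ) h2
  · intro a ha b hb h
    rw [Prod.mk.injEq] at h
    exact Prod.ext (emb1_inj ht h.1) (emb1_inj ht h.2)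
  · intro x hx
    simp only [Finset.mem_filter, Finset.mem_univ, true_and] at hx
    obtain ⟨⟨⟨hlt, hσ⟩, h1⟩, h2⟩ := hx
    refine ⟨(⟨x.1.val, h1⟩, ⟨x.2.val, h2⟩), ?_, ?_⟩
    · simp only [Finset.mem_filter, Finset.mem_univ, true_and]
      have e1 : emb1 ht (⟨x.1.val, h1⟩ : Fin (m * t)) = x.1 := by ext; rfl
      have e2 : emb1 ht (⟨x.2.val, h2⟩ : Fin (m * t)) = x.2 := by ext; rfl
      refine ⟨hlt, ?_⟩
      rw [← (eOf_strictMono ht σ).lt_iff_lt, eOf_tauPerm, eOf_tauPerm, e1, e2]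
      exact hσ
    · refine Prod.ext ?_ ?_ <;> (ext; rfl)
  · intro y hy
    rw [eOf_tauPerm, eOf_tauPerm]

lemma qSign_part2 (ht : t ≤ n) (q : Fin (m * n) → Fin (m * n) → K)
    (σ : Equiv.Perm (Fin (m * n))) :
    qSign (fun a b => q (fOf ht σ a) (fOf ht σ b)) (rhoPerm ht σ) =
    ∏ x ∈ Finset.univ.filter (fun x : Fin (m * n) × Fin (m * n) =>
        (x.1 < x.2 ∧ σ x.2 < σ x.1) ∧ ¬ x.1.val < m * t),
      (-q (σ x.2) (σ x.1)) := by
  have hMN : m * t + m * (n - t) = m * n := by rw [← Nat.mul_add]; congr 1; omega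
  rw [qSign]
  refine Finset.prod_bij (fun y _ => (emb2 ht y.1, emb2 ht y.2)) ?_ ?_ ?_ ?_
  · intro y hy
    simp only [Finset.mem_filter, Finset.mem_univ, true_and] at hy ⊢
    obtain ⟨h1, h2⟩ := hy
    refine ⟨⟨?_, ?_⟩, by simp [emb2]⟩
    · show (emb2 ht y.1).val < (emb2 ht y.2).val
      have : y.1.val < y.2.val := h1
      simp only [emb2]; omega
    · rw [← fOf_rhoPerm ht σ y.1, ← fOf_rhoPerm ht σ y.2]
      exact (fOf_strictMono ht σ) h2
  · intro a ha b hb h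
    rw [Prod.mk.injEq] at h
    exact Prod.ext (emb2_inj ht h.1) (emb2_inj ht h.2)
  · intro x hx
    simp only [Finset.mem_filter, Finset.mem_univ, true_and, not_lt] at hx
    obtain ⟨⟨hlt, hσ⟩, h1⟩ := hx
    have hlt' : x.1.val < x.2.val := hlt
    have h2 : m * t ≤ x.2.val := le_trans h1 (le_of_lt hlt')
    have hx1 : x.1.val - m * t < m * (n - t) := by have := x.1.isLt; omega
    have hx2 : x.2.val - m * t < m * (n - t) := by have := x.2.isLt; omega
    have e1 : emb2 ht (⟨x.1.val - m * t, hx1⟩ : Fin (m * (n - t))) = x.1 := by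
      ext; simp only [emb2]; omega
    have e2 : emb2 ht (⟨x.2.val - m * t, hx2⟩ : Fin (m * (n - t))) = x.2 := by
      ext; simp only [emb2]; omega
    refine ⟨(⟨x.1.val - m * t, hx1⟩, ⟨x.2.val - m * t, hx2⟩), ?_, ?_⟩
    · simp only [Finset.mem_filter, Finset.mem_univ, true_and]
      constructor
      · show x.1.val - m * t < x.2.val - m * t
        omega
      · rw [← (fOf_strictMono ht σ).lt_iff_lt, fOf_rhoPerm, fOf_rhoPerm, e1, e2]
        exact hσ
    · exact Prod.ext e1 e2
  · intro y hy
    rw [fOf_rhoPerm, fOf_rhoPerm]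

lemma qSign_part3 (ht : t ≤ n) (q : Fin (m * n) → Fin (m * n) → K)
    (σ : Equiv.Perm (Fin (m * n))) :
    (∏ x ∈ Finset.univ.filter
        (fun x : Fin (m * t) × Fin (m * (n - t)) => fOf ht σ x.2 < eOf ht σ x.1),
      (-q (fOf ht σ x.2) (eOf ht σ x.1))) =
    ∏ x ∈ Finset.univ.filter (fun x : Fin (m * n) × Fin (m * n) =>
        ((x.1 < x.2 ∧ σ x.2 < σ x.1) ∧ x.1.val < m * t) ∧ ¬ x.2.val < m * t),
      (-q (σ x.2) (σ x.1)) := by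
  refine Finset.prod_bij
    (fun y _ => (emb1 ht ((tauPerm ht σ).symm y.1), emb2 ht ((rhoPerm ht σ).symm y.2)))
    ?_ ?_ ?_ ?_
  · intro y hy
    simp only [Finset.mem_filter, Finset.mem_univ, true_and] at hy ⊢
    have e1 : σ (emb1 ht ((tauPerm ht σ).symm y.1)) = eOf ht σ y.1 := by
      rw [← eOf_tauPerm ht σ, Equiv.apply_symm_apply]
    have e2 : σ (emb2 ht ((rhoPerm ht σ).symm y.2)) = fOf ht σ y.2 := by
      rw [← fOf_rhoPerm ht σ, Equiv.apply_symm_apply]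
    refine ⟨⟨⟨?_, ?_⟩, ((tauPerm ht σ).symm y.1).isLt⟩, by simp [emb2]⟩
    · show (emb1 ht ((tauPerm ht σ).symm y.1)).val < (emb2 ht ((rhoPerm ht σ).symm y.2)).val
      have := ((tauPerm ht σ).symm y.1).isLt
      simp only [emb1, emb2]; omega
    · rw [e1, e2]; exact hy
  · intro a ha b hb h
    rw [Prod.mk.injEq] at h
    have h1 := (tauPerm ht σ).symm.injective (emb1_inj ht h.1)
    have h2 := (rhoPerm ht σ).symm.injective (emb2_inj ht h.2)
    exact Prod.ext h1 h2
  · intro x hx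
    simp only [Finset.mem_filter, Finset.mem_univ, true_and, not_lt] at hx
    obtain ⟨⟨⟨hlt, hσ⟩, h1⟩, h2⟩ := hx
    have hx2 : x.2.val - m * t < m * (n - t) := by
      have hMN : m * t + m * (n - t) = m * n := by rw [← Nat.mul_add]; congr 1; omega
      have := x.2.isLt; omega
    have e1 : emb1 ht (⟨x.1.val, h1⟩ : Fin (m * t)) = x.1 := by ext; rfl
    have e2 : emb2 ht (⟨x.2.val - m * t, hx2⟩ : Fin (m * (n - t))) = x.2 := by
      ext; simp only [emb2]; omega
    refine ⟨(tauPerm ht σ ⟨x.1.val, h1⟩, rhoPerm ht σ ⟨x.2.val - m * t, hx2⟩), ?_, ?_⟩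
    · simp only [Finset.mem_filter, Finset.mem_univ, true_and]
      rw [fOf_rhoPerm, eOf_tauPerm, e1, e2]
      exact hσ
    · dsimp only
      rw [Equiv.symm_apply_apply, Equiv.symm_apply_apply]
      exact Prod.ext e1 e2
  · intro y hy
    have e1 : σ (emb1 ht ((tauPerm ht σ).symm y.1)) = eOf ht σ y.1 := by
      rw [← eOf_tauPerm ht σ, Equiv.apply_symm_apply]
    have e2 : σ (emb2 ht ((rhoPerm ht σ).symm y.2)) = fOf ht σ y.2 := by
      rw [← fOf_rhoPerm ht σ, Equiv.apply_symm_apply]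
    rw [e1, e2]

lemma qSign_split (ht : t ≤ n) (q : Fin (m * n) → Fin (m * n) → K)
    (σ : Equiv.Perm (Fin (m * n))) :
    qSign q σ =
      (∏ x ∈ Finset.univ.filter
          (fun x : Fin (m * t) × Fin (m * (n - t)) => fOf ht σ x.2 < eOf ht σ x.1),
        (-q (fOf ht σ x.2) (eOf ht σ x.1))) *
      (qSign (fun a b => q (eOf ht σ a) (eOf ht σ b)) (tauPerm ht σ) *
       qSign (fun a b => q (fOf ht σ a) (fOf ht σ b)) (rhoPerm ht σ)) := by
  rw [qSign_part1, qSign_part2, qSign_part3]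
  conv_lhs => rw [qSign]
  rw [← Finset.prod_filter_mul_prod_filter_not
      (Finset.univ.filter (fun x : Fin (m * n) × Fin (m * n) => x.1 < x.2 ∧ σ x.2 < σ x.1))
      (fun x => x.1.val < m * t)]
  rw [← Finset.prod_filter_mul_prod_filter_not
      ((Finset.univ.filter (fun x : Fin (m * n) × Fin (m * n) =>
        x.1 < x.2 ∧ σ x.2 < σ x.1)).filter (fun x => x.1.val < m * t))
      (fun x => x.2.val < m * t)]
  simp only [Finset.filter_filter]
  ring

end Aux4
section Aux5

variable {m n t : ℕ}

lemma oprod_block (ht : t ≤ n) (σ : Equiv.Perm (Fin (m * n)))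
    (B : (Fin m → Fin (m * n)) → A) :
    oprod (fun k : Fin n => B (fun a => σ (midx k a))) =
      oprod (fun k : Fin t => B (fun a => eOf ht σ (tauPerm ht σ (midx k a)))) *
      oprod (fun k : Fin (n - t) => B (fun a => fOf ht σ (rhoPerm ht σ (midx k a)))) := by
  have hnt : t + (n - t) = n := by omega
  rw [← oprod_cast hnt (fun k => B (fun a => σ (midx k a))), oprod_split]
  congr 1
  · apply congrArg oprod
    funext k
    apply congrArg B
    funext a
    rw [eOf_tauPerm ht σ (midx k a)]
    apply congrArg σ
    ext
    rfl
  · apply congrArg oprod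
    funext k
    apply congrArg B
    funext a
    rw [fOf_rhoPerm ht σ (midx k a)]
    apply congrArg σ
    ext
    show m * (t + k.val) + a.val = m * t + (m * k.val + a.val)
    rw [Nat.mul_add]; omega

lemma glue_surj (ht : t ≤ n) {e : Fin (m * t) → Fin (m * n)}
    {f : Fin (m * (n - t)) → Fin (m * n)}
    (he : StrictMono e) (hf : StrictMono f) (hd : ∀ a b, e a ≠ f b)
    (τ : Equiv.Perm (Fin (m * t))) (ρ : Equiv.Perm (Fin (m * (n - t)))) :
    ∃ σ : Equiv.Perm (Fin (m * n)),
      (∀ a, σ (emb1 ht a) = e (τ a)) ∧ (∀ a, σ (emb2 ht a) = f (ρ a)) ∧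
      eOf ht σ = e ∧ fOf ht σ = f ∧ tauPerm ht σ = τ ∧ rhoPerm ht σ = ρ := by
  have hinj : Function.Injective (glue ht (fun a => e (τ a)) (fun a => f (ρ a))) :=
    glue_inj ht (he.injective.comp τ.injective) (hf.injective.comp ρ.injective)
      (fun a b => hd (τ a) (ρ b))
  set σ₀ : Equiv.Perm (Fin (m * n)) :=
    Equiv.ofBijective _ (Finite.injective_iff_bijective.mp hinj) with hσ₀
  have h1 : ∀ a, σ₀ (emb1 ht a) = e (τ a) := fun a =>
    glue_emb1 ht (fun a => e (τ a)) (fun a => f (ρ a)) a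
  have h2 : ∀ a, σ₀ (emb2 ht a) = f (ρ a) := fun a =>
    glue_emb2 ht (fun a => e (τ a)) (fun a => f (ρ a)) a
  have heOf : eOf ht σ₀ = e := by
    have hmem : ∀ x, (OrderEmbedding.ofStrictMono e he) x ∈ Iset ht σ₀ := by
      intro x
      refine Finset.mem_image.mpr ⟨τ.symm x, Finset.mem_univ _, ?_⟩
      rw [h1, Equiv.apply_symm_apply]
      rfl
    have hE := Finset.orderEmbOfFin_unique' (Iset_card ht σ₀) hmem
    funext a
    rw [eOf, ← hE]
    rfl
  have hfOf : fOf ht σ₀ = f := by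
    have hmem : ∀ x, (OrderEmbedding.ofStrictMono f hf) x ∈ Jset ht σ₀ := by
      intro x
      refine Finset.mem_image.mpr ⟨ρ.symm x, Finset.mem_univ _, ?_⟩
      rw [h2, Equiv.apply_symm_apply]
      rfl
    have hE := Finset.orderEmbOfFin_unique' (Jset_card ht σ₀) hmem
    funext a
    rw [fOf, ← hE]
    rfl
  have hτ : tauPerm ht σ₀ = τ := by
    apply Equiv.ext
    intro a
    apply he.injective
    have h3 := eOf_tauPerm ht σ₀ a
    rw [heOf] at h3
    rw [h3, h1]
  have hρ : rhoPerm ht σ₀ = ρ := by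
    apply Equiv.ext
    intro a
    apply hf.injective
    have h3 := fOf_rhoPerm ht σ₀ a
    rw [hfOf] at h3
    rw [h3, h2]
  exact ⟨σ₀, h1, h2, heOf, hfOf, hτ, hρ⟩

end Aux5

/-- hyper-Pfaffian expansion:
`Pf_q(B) = Σ_I inv(I, Iᶜ) Pf_q(B_I) Pf_q(B_{Iᶜ})`, the sum running over all
`mt`-element subsets `I` of `{1, …, mn}`; a subset together with its complement is
encoded by the pair of strictly increasing enumerations `(e, f)` with disjoint
ranges. -/
theorem qhpf_expansion {m n : ℕ} (hm : 2 ≤ m)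
    (p q : Fin (m * n) → Fin (m * n) → K) (u : K)
    (hpu : PUCondition p q u) (B : (Fin m → Fin (m * n)) → A)
    (t : ℕ) (ht : t ≤ n) :
    qhpf q B
      = ∑ ef ∈ Finset.univ.filter
          (fun ef : (Fin (m * t) → Fin (m * n)) × (Fin (m * (n - t)) → Fin (m * n)) =>
            (∀ a b, a < b → ef.1 a < ef.1 b) ∧ (∀ a b, a < b → ef.2 a < ef.2 b) ∧
            (∀ a b, ef.1 a ≠ ef.2 b)),
        (∏ x ∈ Finset.univ.filter
            (fun x : Fin (m * t) × Fin (m * (n - t)) => ef.2 x.2 < ef.1 x.1),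
          (-q (ef.2 x.2) (ef.1 x.1))) •
        (qhpf (fun a b => q (ef.1 a) (ef.1 b)) (fun J => B (fun a => ef.1 (J a)))
          * qhpf (fun a b => q (ef.2 a) (ef.2 b)) (fun J => B (fun a => ef.2 (J a)))) := by
  classical
  calc qhpf q B
      = ∑ y ∈ ((Finset.univ.filter
          (fun ef : (Fin (m * t) → Fin (m * n)) × (Fin (m * (n - t)) → Fin (m * n)) =>
            (∀ a b, a < b → ef.1 a < ef.1 b) ∧ (∀ a b, a < b → ef.2 a < ef.2 b) ∧
            (∀ a b, ef.1 a ≠ ef.2 b))) ×ˢ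
          ((Finset.univ.filter (fun τ : Equiv.Perm (Fin (m * t)) =>
              ∀ (k : Fin t) (a b : Fin m), a < b → τ (midx k a) < τ (midx k b))) ×ˢ
           (Finset.univ.filter (fun ρ : Equiv.Perm (Fin (m * (n - t))) =>
              ∀ (k : Fin (n - t)) (a b : Fin m), a < b → ρ (midx k a) < ρ (midx k b))))),
        ((∏ x ∈ Finset.univ.filter
            (fun x : Fin (m * t) × Fin (m * (n - t)) => y.1.2 x.2 < y.1.1 x.1),
          (-q (y.1.2 x.2) (y.1.1 x.1))) *
          (qSign (fun a b => q (y.1.1 a) (y.1.1 b)) y.2.1 *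
           qSign (fun a b => q (y.1.2 a) (y.1.2 b)) y.2.2)) •
        (oprod (fun k : Fin t => B (fun a => y.1.1 (y.2.1 (midx k a)))) *
         oprod (fun k : Fin (n - t) => B (fun a => y.1.2 (y.2.2 (midx k a))))) := ?_
    _ = _ := ?_
  · rw [qhpf]
    refine Finset.sum_bij
      (fun σ _ => ((eOf ht σ, fOf ht σ), (tauPerm ht σ, rhoPerm ht σ))) ?_ ?_ ?_ ?_
    · intro σ hσ
      simp only [Finset.mem_filter, Finset.mem_univ, true_and] at hσ
      rw [Finset.mem_product, Finset.mem_product]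
      refine ⟨?_, ?_, ?_⟩
      · simp only [Finset.mem_filter, Finset.mem_univ, true_and]
        exact ⟨fun a b h => eOf_strictMono ht σ h, fun a b h => fOf_strictMono ht σ h,
          fun a b => eOf_ne_fOf ht σ a b⟩
      · simp only [Finset.mem_filter, Finset.mem_univ, true_and]
        intro k a b hab
        rw [← (eOf_strictMono ht σ).lt_iff_lt, eOf_tauPerm, eOf_tauPerm,
          emb1_midx ht k a, emb1_midx ht k b]
        exact hσ _ a b hab
      · simp only [Finset.mem_filter, Finset.mem_univ, true_and]
        intro k a b hab
        rw [← (fOf_strictMono ht σ).lt_iff_lt, fOf_rhoPerm, fOf_rhoPerm,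
          emb2_midx ht k a, emb2_midx ht k b]
        exact hσ _ a b hab
    · intro σ₁ h₁ σ₂ h₂ h
      simp only [Prod.mk.injEq] at h
      obtain ⟨⟨he, hf⟩, hτ, hρ⟩ := h
      apply Equiv.ext
      intro x
      by_cases hx : x.val < m * t
      · have hx1 : x = emb1 ht ⟨x.val, hx⟩ := by ext; rfl
        rw [hx1, ← eOf_tauPerm ht σ₁, ← eOf_tauPerm ht σ₂, he, hτ]
      · have h1 : m * t + m * (n - t) = m * n := by rw [← Nat.mul_add]; congr 1; omega
        have hx2 : x.val - m * t < m * (n - t) := by have := x.isLt; omega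
        have hx1 : x = emb2 ht ⟨x.val - m * t, hx2⟩ := by
          ext; simp only [emb2]; omega
        rw [hx1, ← fOf_rhoPerm ht σ₁, ← fOf_rhoPerm ht σ₂, hf, hρ]
    · intro y hy
      rw [Finset.mem_product, Finset.mem_product] at hy
      obtain ⟨hy1, hy2, hy3⟩ := hy
      simp only [Finset.mem_filter, Finset.mem_univ, true_and] at hy1 hy2 hy3
      obtain ⟨he', hf', hd⟩ := hy1
      have he : StrictMono y.1.1 := fun a b h => he' a b h
      have hf : StrictMono y.1.2 := fun a b h => hf' a b h
      obtain ⟨σ₀, h1, h2, heOf, hfOf, hτ, hρ⟩ := glue_surj ht he hf hd y.2.1 y.2.2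
      refine ⟨σ₀, ?_, ?_⟩
      · simp only [Finset.mem_filter, Finset.mem_univ, true_and]
        intro k a b hab
        by_cases hk : k.val < t
        · rw [midx_emb1 ht k hk a, midx_emb1 ht k hk b, h1, h1]
          exact he (hy2 _ a b hab)
        · rw [midx_emb2 ht k hk a, midx_emb2 ht k hk b, h2, h2]
          exact hf (hy3 _ a b hab)
      · rw [heOf, hfOf, hτ, hρ]
    · intro σ hσ
      rw [qSign_split ht q σ, oprod_block ht σ B]
  · rw [Finset.sum_product]
    refine Finset.sum_congr rfl fun ef _ => ?_
    rw [Finset.sum_product]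
    rw [qhpf, qhpf, Finset.sum_mul, Finset.smul_sum]
    refine Finset.sum_congr rfl fun τ _ => ?_
    rw [Finset.mul_sum, Finset.smul_sum]
    refine Finset.sum_congr rfl fun ρ _ => ?_
    rw [smul_mul_smul_comm, smul_smul]
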